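/- Let 0 < a < b, let β ∈ ℝ with β ≠ −1, and let f ∈ C²[a,b]. Then there exists K > 0 such that for every N ∈ ℕ with N ≥ 1, the modified midpoint quadrature error satisfies |E_N| ≤ K/N². -/

import Mathlib

open Filter MeasureTheory Set

/-- The modified midpoint quadrature error `E_N` for `∫_a^b x^β f(x) dx`, where the singular
factor `x^β` is integrated exactly on each subinterval and `f` is evaluated at midpoints:
here `h = (b-a)/N` and `x_t = a + t·h`. -/
noncomputable def midpointError (a b β : ℝ) (f : ℝ → ℝ) (N : ℕ) : ℝ :=
  (∫ x in a..b, x ^ β * f x) -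
    ∑ n ∈ Finset.range N,
      ((a + ((n : ℝ) + 1) * ((b - a) / N)) ^ (β + 1) -
          (a + (n : ℝ) * ((b - a) / N)) ^ (β + 1)) / (β + 1) *
        f (a + ((n : ℝ) + 1 / 2) * ((b - a) / N))

open Set MeasureTheory in
lemma key (a b β : ℝ) (ha : 0 < a) (hβ : β ≠ -1)
    (f f' : ℝ → ℝ) (hfc : ContinuousOn f (Icc a b))
    (hfd : ∀ x ∈ Icc a b, HasDerivWithinAt f (f' x) (Icc a b) x)
    (C₀ M₁ M₂ L : ℝ) (hM₂0 : 0 ≤ M₂) (hL0 : 0 ≤ L)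
    (hC₀ : ∀ x ∈ Icc a b, |x ^ β| ≤ C₀)
    (hM₁ : ∀ x ∈ Icc a b, |f' x| ≤ M₁)
    (hLipf' : ∀ x ∈ Icc a b, ∀ y ∈ Icc a b, |f' x - f' y| ≤ M₂ * |x - y|)
    (hLipr : ∀ x ∈ Icc a b, ∀ y ∈ Icc a b, |x ^ β - y ^ β| ≤ L * |x - y|)
    (u v : ℝ) (hu : u ∈ Icc a b) (hv : v ∈ Icc a b) (huv : u ≤ v) :
    |(∫ x in u..v, x ^ β * f x) - (v ^ (β+1) - u ^ (β+1)) / (β+1) * f ((u+v)/2)|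
      ≤ (C₀ * M₂ + L * M₁) * (v - u)^3 := by
  set m := (u + v) / 2 with hm
  have hsub : Icc u v ⊆ Icc a b := Icc_subset_Icc hu.1 hv.2
  have hmem : m ∈ Icc u v := ⟨by simp only [hm]; linarith, by simp only [hm]; linarith⟩
  have hmab : m ∈ Icc a b := hsub hmem
  have hC₀0 : 0 ≤ C₀ := le_trans (abs_nonneg _) (hC₀ m hmab)
  have hM₁0 : 0 ≤ M₁ := le_trans (abs_nonneg _) (hM₁ m hmab)
  have hrc : ContinuousOn (fun x : ℝ => x ^ β) (Icc a b) := by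
    apply ContinuousOn.rpow_const continuousOn_id
    intro x hx; left; exact ne_of_gt (lt_of_lt_of_le ha hx.1)
  have huIcc : uIcc u v ⊆ Icc a b := by
    rw [uIcc_of_le huv]; exact hsub
  have hw : (v ^ (β+1) - u ^ (β+1)) / (β+1) = ∫ x in u..v, x ^ β := by
    rw [integral_rpow]
    right
    refine ⟨hβ, fun h0 => ?_⟩
    have := huIcc h0
    linarith [this.1]
  have hint1 : IntervalIntegrable (fun x => x ^ β * f x) volume u v :=
    ((hrc.mul hfc).mono hsub).intervalIntegrable_of_Icc huv
  have hint2 : IntervalIntegrable (fun x : ℝ => x ^ β) volume u v :=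
    (hrc.mono hsub).intervalIntegrable_of_Icc huv
  have hBcont : ContinuousOn (fun x => x ^ β * (f x - f m - f' m * (x - m)) + (x ^ β - m ^ β) * (f' m * (x - m))) (Icc u v) := by
    apply ContinuousOn.add
    · exact (hrc.mono hsub).mul (((hfc.mono hsub).sub continuousOn_const).sub (continuousOn_const.mul (continuousOn_id.sub continuousOn_const)))
    · exact ((hrc.mono hsub).sub continuousOn_const).mul (continuousOn_const.mul (continuousOn_id.sub continuousOn_const))
  have hintB : IntervalIntegrable (fun x => x ^ β * (f x - f m - f' m * (x - m)) + (x ^ β - m ^ β) * (f' m * (x - m))) volume u v :=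
    hBcont.intervalIntegrable_of_Icc huv
  have hintlin : IntervalIntegrable (fun x : ℝ => m ^ β * f' m * (x - m)) volume u v := by
    apply Continuous.intervalIntegrable; fun_prop
  have hzero : (∫ x in u..v, m ^ β * f' m * (x - m)) = 0 := by
    have h1 : (∫ x in u..v, (x - m)) = 0 := by
      rw [intervalIntegral.integral_sub (f := fun x : ℝ => x) (g := fun _ => m)
        (Continuous.intervalIntegrable (by fun_prop) u v)
        (Continuous.intervalIntegrable (by fun_prop) u v), integral_id,
        intervalIntegral.integral_const]
      simp only [hm, smul_eq_mul]; ring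
    rw [intervalIntegral.integral_const_mul, h1, mul_zero]
  have hsplit : (∫ x in u..v, x ^ β * f x) - (v ^ (β+1) - u ^ (β+1)) / (β+1) * f m
      = ∫ x in u..v, (x ^ β * (f x - f m - f' m * (x - m)) + (x ^ β - m ^ β) * (f' m * (x - m))) := by
    have hptw : (fun x : ℝ => x ^ β * f x)
        = fun x => ((x ^ β * (f x - f m - f' m * (x - m)) + (x ^ β - m ^ β) * (f' m * (x - m)))
            + m ^ β * f' m * (x - m)) + x ^ β * f m := funext fun x => by ring
    have heq : (∫ x in u..v, x ^ β * f x)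
        = (∫ x in u..v, (x ^ β * (f x - f m - f' m * (x - m)) + (x ^ β - m ^ β) * (f' m * (x - m))))
          + (∫ x in u..v, m ^ β * f' m * (x - m)) + (∫ x in u..v, x ^ β * f m) := by
      rw [hptw, intervalIntegral.integral_add (hintB.add hintlin) (hint2.mul_const _),
        intervalIntegral.integral_add hintB hintlin]
    rw [heq, hzero, intervalIntegral.integral_mul_const, hw]
    ring
  rw [hsplit]
  have hbound : ∀ x ∈ Set.uIoc u v,
      ‖x ^ β * (f x - f m - f' m * (x - m)) + (x ^ β - m ^ β) * (f' m * (x - m))‖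
        ≤ (C₀ * M₂ + L * M₁) * (v - u)^2 := by
    intro x hx
    have hxuv : x ∈ Icc u v := by
      rw [uIoc_of_le huv] at hx; exact ⟨le_of_lt hx.1, hx.2⟩
    have hxab : x ∈ Icc a b := hsub hxuv
    have hxm : |x - m| ≤ v - u := by
      rw [abs_le]; constructor <;> (simp only [hm]; push_cast; try constructor) <;>
        linarith [hxuv.1, hxuv.2]
    -- Taylor-type bound
    have hg : ∀ y ∈ Icc u v, HasDerivWithinAt
        (fun y => f y - f m - f' m * (y - m)) (f' y - f' m) (Icc u v) y := by
      intro y hy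
      have h1 := (hfd y (hsub hy)).mono hsub
      have h2 : HasDerivWithinAt (fun y : ℝ => f m + f' m * (y - m)) (f' m) (Icc u v) y := by
        have := (((hasDerivWithinAt_id y (Icc u v)).sub_const m).const_mul (f' m)).const_add (f m)
        simpa using this
      have := h1.sub h2
      exact this.congr (fun z _ => by simp only [Pi.sub_apply]; ring) (by simp only [Pi.sub_apply]; ring)
    have hgbound : ∀ y ∈ Icc u v, ‖f' y - f' m‖ ≤ M₂ * (v - u) := by
      intro y hy
      have h1 := hLipf' y (hsub hy) m hmab
      have hym : |y - m| ≤ v - u := by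
        rw [abs_le]; constructor <;> (simp only [hm]; try constructor) <;>
          linarith [hy.1, hy.2]
      calc ‖f' y - f' m‖ = |f' y - f' m| := rfl
        _ ≤ M₂ * |y - m| := h1
        _ ≤ M₂ * (v - u) := mul_le_mul_of_nonneg_left hym hM₂0
    have htay : |f x - f m - f' m * (x - m)| ≤ M₂ * (v - u) * |x - m| := by
      have := Convex.norm_image_sub_le_of_norm_hasDerivWithin_le hg hgbound
        (convex_Icc u v) hmem hxuv
      simpa using this
    have e1 : |x ^ β * (f x - f m - f' m * (x - m))| ≤ C₀ * (M₂ * (v - u) * (v - u)) := by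
      rw [abs_mul]
      apply mul_le_mul (hC₀ x hxab) _ (abs_nonneg _) hC₀0
      calc |f x - f m - f' m * (x - m)| ≤ M₂ * (v - u) * |x - m| := htay
        _ ≤ M₂ * (v - u) * (v - u) := by
            apply mul_le_mul_of_nonneg_left hxm
            have : (0:ℝ) ≤ v - u := by linarith
            positivity
    have e2 : |(x ^ β - m ^ β) * (f' m * (x - m))| ≤ L * (v - u) * (M₁ * (v - u)) := by
      rw [abs_mul, abs_mul]
      apply mul_le_mul
      · calc |x ^ β - m ^ β| ≤ L * |x - m| := hLipr x hxab m hmab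
          _ ≤ L * (v - u) := mul_le_mul_of_nonneg_left hxm hL0
      · exact mul_le_mul (hM₁ m hmab) hxm (abs_nonneg _) hM₁0
      · positivity
      · have : (0:ℝ) ≤ v - u := by linarith
        positivity
    calc ‖x ^ β * (f x - f m - f' m * (x - m)) + (x ^ β - m ^ β) * (f' m * (x - m))‖
        ≤ |x ^ β * (f x - f m - f' m * (x - m))| + |(x ^ β - m ^ β) * (f' m * (x - m))| :=
          norm_add_le _ _
      _ ≤ C₀ * (M₂ * (v - u) * (v - u)) + L * (v - u) * (M₁ * (v - u)) := add_le_add e1 e2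
      _ = (C₀ * M₂ + L * M₁) * (v - u)^2 := by ring
  have hfin := intervalIntegral.norm_integral_le_of_norm_le_const hbound
  rw [Real.norm_eq_abs] at hfin
  calc |∫ x in u..v, (x ^ β * (f x - f m - f' m * (x - m)) + (x ^ β - m ^ β) * (f' m * (x - m)))|
      ≤ (C₀ * M₂ + L * M₁) * (v - u)^2 * |v - u| := hfin
    _ = (C₀ * M₂ + L * M₁) * (v - u)^3 := by
        rw [abs_of_nonneg (by linarith : (0:ℝ) ≤ v - u)]; ring


theorem stmt3 (a b β : ℝ) (ha : 0 < a) (hab : a < b) (hβ : β ≠ -1)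
    (f : ℝ → ℝ) (hf : ContDiffOn ℝ 2 f (Set.Icc a b)) :
    ∃ K : ℝ, 0 < K ∧ ∀ N : ℕ, 1 ≤ N →
      |midpointError a b β f N| ≤ K / (N : ℝ) ^ 2 := by
  have hudiff : UniqueDiffOn ℝ (Icc a b) := uniqueDiffOn_Icc hab
  set f' := derivWithin f (Icc a b) with hf'def
  set f'' := derivWithin f' (Icc a b) with hf''def
  have hfc : ContinuousOn f (Icc a b) := hf.continuousOn
  have hfd : ∀ x ∈ Icc a b, HasDerivWithinAt f (f' x) (Icc a b) x := fun x hx =>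
    ((hf.differentiableOn (by norm_num)) x hx).hasDerivWithinAt
  have hf'1 : ContDiffOn ℝ 1 f' (Icc a b) := hf.derivWithin hudiff (by norm_num)
  have hf'c : ContinuousOn f' (Icc a b) := hf'1.continuousOn
  have hf'd : ∀ x ∈ Icc a b, HasDerivWithinAt f' (f'' x) (Icc a b) x := fun x hx =>
    ((hf'1.differentiableOn (by norm_num)) x hx).hasDerivWithinAt
  have hf''0 : ContDiffOn ℝ 0 f'' (Icc a b) := hf'1.derivWithin hudiff (by norm_num)
  have hf''c : ContinuousOn f'' (Icc a b) := hf''0.continuousOn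
  have hrc : ContinuousOn (fun x : ℝ => x ^ β) (Icc a b) := by
    apply ContinuousOn.rpow_const continuousOn_id
    intro x hx; left; exact ne_of_gt (lt_of_lt_of_le ha hx.1)
  obtain ⟨C₀, hC₀⟩ := isCompact_Icc.exists_bound_of_continuousOn hrc
  obtain ⟨M₁, hM₁⟩ := isCompact_Icc.exists_bound_of_continuousOn hf'c
  obtain ⟨M₂', hM₂'⟩ := isCompact_Icc.exists_bound_of_continuousOn hf''c
  set M₂ := max M₂' 0 with hM₂def
  have hrderiv : ∀ x ∈ Icc a b, HasDerivWithinAt (fun x : ℝ => x ^ β) (β * x ^ (β - 1)) (Icc a b) x :=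
    fun x hx => (Real.hasDerivAt_rpow_const (Or.inl (ne_of_gt (lt_of_lt_of_le ha hx.1)))).hasDerivWithinAt
  have hrdc : ContinuousOn (fun x : ℝ => β * x ^ (β - 1)) (Icc a b) := by
    apply ContinuousOn.mul continuousOn_const
    apply ContinuousOn.rpow_const continuousOn_id
    intro x hx; left; exact ne_of_gt (lt_of_lt_of_le ha hx.1)
  obtain ⟨L', hL'⟩ := isCompact_Icc.exists_bound_of_continuousOn hrdc
  set L := max L' 0 with hLdef
  have hLipf' : ∀ x ∈ Icc a b, ∀ y ∈ Icc a b, |f' x - f' y| ≤ M₂ * |x - y| := by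
    intro x hx y hy
    have := Convex.norm_image_sub_le_of_norm_hasDerivWithin_le (C := M₂) hf'd
      (fun z hz => le_trans (hM₂' z hz) (le_max_left _ _)) (convex_Icc a b) hy hx
    simpa using this
  have hLipr : ∀ x ∈ Icc a b, ∀ y ∈ Icc a b, |x ^ β - y ^ β| ≤ L * |x - y| := by
    intro x hx y hy
    have := Convex.norm_image_sub_le_of_norm_hasDerivWithin_le (C := L) hrderiv
      (fun z hz => le_trans (hL' z hz) (le_max_left _ _)) (convex_Icc a b) hy hx
    simpa using this
  have hC₀0 : 0 ≤ C₀ := le_trans (norm_nonneg _) (hC₀ a ⟨le_refl a, le_of_lt hab⟩)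
  have hM₁0 : 0 ≤ M₁ := le_trans (norm_nonneg _) (hM₁ a ⟨le_refl a, le_of_lt hab⟩)
  have hM₂0 : 0 ≤ M₂ := le_max_right _ _
  have hL0 : 0 ≤ L := le_max_right _ _
  have hC₀' : ∀ x ∈ Icc a b, |x ^ β| ≤ C₀ := hC₀
  have hM₁' : ∀ x ∈ Icc a b, |f' x| ≤ M₁ := hM₁
  set C := C₀ * M₂ + L * M₁ with hCdef
  have hC0 : 0 ≤ C := by positivity
  have hba : 0 < b - a := by linarith
  refine ⟨(C + 1) * (b - a) ^ 3, by positivity, fun N hN => ?_⟩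
  have hN0 : (0:ℝ) < N := by exact_mod_cast Nat.pos_of_ne_zero (by omega)
  set h := (b - a) / (N : ℝ) with hhdef
  have hh : 0 < h := by positivity
  have hNh : (N : ℝ) * h = b - a := by
    rw [hhdef]; field_simp
  have hxk : ∀ k : ℕ, k ≤ N → a + k * h ∈ Icc a b := by
    intro k hk
    constructor
    · nlinarith [Nat.cast_nonneg (α := ℝ) k]
    · have : (k : ℝ) * h ≤ (N : ℝ) * h := by
        apply mul_le_mul_of_nonneg_right _ (le_of_lt hh)
        exact_mod_cast hk
      linarith [hNh]
  have hintk : ∀ k < N, IntervalIntegrable (fun x => x ^ β * f x) volume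
      (a + k * h) (a + ((k:ℝ) + 1) * h) := by
    intro k hk
    apply ContinuousOn.intervalIntegrable
    apply (hrc.mul hfc).mono
    rw [uIcc_of_le (by nlinarith : a + (k:ℝ) * h ≤ a + ((k:ℝ)+1) * h)]
    exact Icc_subset_Icc (hxk k (le_of_lt hk)).1 (by
      have := hxk (k+1) (by omega)
      push_cast at this
      exact this.2)
  have hsum : (∫ x in a..b, x ^ β * f x)
      = ∑ n ∈ Finset.range N, ∫ x in (a + n * h)..(a + ((n:ℝ) + 1) * h), x ^ β * f x := by
    have hadj := intervalIntegral.sum_integral_adjacent_intervals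
      (f := fun x => x ^ β * f x) (μ := volume) (a := fun k : ℕ => a + k * h) (n := N)
      (by intro k hk; have := hintk k hk; push_cast; exact this)
    simp only [Nat.cast_zero, zero_mul, add_zero, Nat.cast_add, Nat.cast_one] at hadj
    rw [hNh, show a + (b - a) = b by ring] at hadj
    rw [← hadj]
  have hterm : ∀ n ∈ Finset.range N,
      |(∫ x in (a + n * h)..(a + ((n:ℝ) + 1) * h), x ^ β * f x)
        - ((a + ((n:ℝ) + 1) * h) ^ (β + 1) - (a + (n:ℝ) * h) ^ (β + 1)) / (β + 1)
          * f (a + ((n:ℝ) + 1 / 2) * h)| ≤ C * h ^ 3 := by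
    intro n hn
    rw [Finset.mem_range] at hn
    have hu := hxk n (le_of_lt hn)
    have hv : a + ((n:ℝ) + 1) * h ∈ Icc a b := by
      have := hxk (n+1) (by omega); push_cast at this; exact this
    have huv : a + (n:ℝ) * h ≤ a + ((n:ℝ) + 1) * h := by nlinarith
    have hkey := key a b β ha hβ f f' hfc hfd C₀ M₁ M₂ L hM₂0 hL0 hC₀' hM₁' hLipf' hLipr
      (a + (n:ℝ) * h) (a + ((n:ℝ) + 1) * h) hu hv huv
    rw [show ((a + (n:ℝ) * h) + (a + ((n:ℝ) + 1) * h)) / 2 = a + ((n:ℝ) + 1/2) * h by ring,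
      show (a + ((n:ℝ) + 1) * h) - (a + (n:ℝ) * h) = h by ring] at hkey
    exact hkey
  have hme : midpointError a b β f N
      = ∑ n ∈ Finset.range N,
        ((∫ x in (a + n * h)..(a + ((n:ℝ) + 1) * h), x ^ β * f x)
          - ((a + ((n:ℝ) + 1) * h) ^ (β + 1) - (a + (n:ℝ) * h) ^ (β + 1)) / (β + 1)
            * f (a + ((n:ℝ) + 1 / 2) * h)) := by
    rw [midpointError, hsum, ← Finset.sum_sub_distrib]
  rw [hme]
  calc |∑ n ∈ Finset.range N,
        ((∫ x in (a + n * h)..(a + ((n:ℝ) + 1) * h), x ^ β * f x)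
          - ((a + ((n:ℝ) + 1) * h) ^ (β + 1) - (a + (n:ℝ) * h) ^ (β + 1)) / (β + 1)
            * f (a + ((n:ℝ) + 1 / 2) * h))|
      ≤ ∑ n ∈ Finset.range N, |(∫ x in (a + n * h)..(a + ((n:ℝ) + 1) * h), x ^ β * f x)
          - ((a + ((n:ℝ) + 1) * h) ^ (β + 1) - (a + (n:ℝ) * h) ^ (β + 1)) / (β + 1)
            * f (a + ((n:ℝ) + 1 / 2) * h)| := Finset.abs_sum_le_sum_abs _ _
    _ ≤ ∑ n ∈ Finset.range N, C * h ^ 3 := Finset.sum_le_sum hterm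
    _ = N * (C * h ^ 3) := by rw [Finset.sum_const, Finset.card_range, nsmul_eq_mul]
    _ = C * (b - a) ^ 3 / (N : ℝ) ^ 2 := by
        rw [hhdef]; field_simp
    _ ≤ (C + 1) * (b - a) ^ 3 / (N : ℝ) ^ 2 := by
        apply div_le_div_of_nonneg_right ?_ (by positivity)
        nlinarith [pow_pos hba 3]
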